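/- Let m, n be coprime positive integers and let p_m be the affine permutation with window [0, m, 2m, ..., (n−1)m]. An affine permutation ω satisfies ω(x+m) > ω(x) for all x ∈ ℤ (i.e., ω is m-stable) if and only if, writing ω·p_m in window notation [x_1,...,x_n], one has x_1 < x_2 < ... < x_n < x_1 + mn. -/

import Mathlib

/-- The affine permutation `p_m` with window `[0, m, 2m, …, (n−1)m]`, extended
`n`-periodically to all of `ℤ`. -/
def pmF (m n : ℕ) : ℤ → ℤ := fun i => m * ((i - 1) % n) + n * ((i - 1) / n)

lemma pmF_eq (m n : ℕ) (i : ℤ) (h1 : 1 ≤ i) (h2 : i ≤ n) :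
    pmF m n i = m * (i - 1) := by
  have h0 : (0:ℤ) ≤ i - 1 := by omega
  have hlt : i - 1 < (n:ℤ) := by omega
  unfold pmF
  rw [Int.emod_eq_of_lt h0 hlt, Int.ediv_eq_zero_of_lt h0 hlt]
  ring

/-- For coprime positive `m, n`, an affine permutation `ω` is
`m`-stable (`ω(x+m) > ω(x)` for all `x`) iff the window `[x_1,…,x_n]` of `ω ∘ p_m`
satisfies `x_1 < x_2 < ⋯ < x_n < x_1 + mn`. -/
theorem stmt_3 (m n : ℕ) (hm : 0 < m) (hn : 0 < n) (hco : Nat.Coprime m n)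
    (ω : ℤ → ℤ) (hbij : Function.Bijective ω)
    (hper : ∀ i : ℤ, ω (i + n) = ω i + n) :
    (∀ x : ℤ, ω x < ω (x + m)) ↔
      ((∀ i : ℤ, 1 ≤ i → i < n → ω (pmF m n i) < ω (pmF m n (i + 1))) ∧
        ω (pmF m n n) < ω (pmF m n 1) + m * n) := by
  -- periodicity for arbitrary multiples of n
  have hper' : ∀ (k : ℤ) (x : ℤ), ω (x + n * k) = ω x + n * k := by
    intro k
    induction k using Int.induction_on with
    | zero => intro x; simp
    | succ k ih =>
        intro x
        have := hper (x + n * k)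
        have h2 := ih x
        have : ω (x + n * (k + 1)) = ω (x + n * k) + n := by
          rw [show x + n * ((k:ℤ) + 1) = (x + n * k) + n by ring]; exact hper _
        rw [this, h2]; ring
    | pred k ih =>
        intro x
        have h2 := ih (x - n)
        have h3 : ω ((x - n) + n) = ω (x - n) + n := hper _
        have h4 : ω x = ω (x - n) + n := by rw [← h3]; ring_nf
        have : x + n * (-(k:ℤ) - 1) = (x - n) + n * (-(k:ℤ)) := by ring
        rw [this, h2, h4]; ring
  -- key: ω (m*j) < ω (m*(j+1)) for 0 ≤ j ≤ n-1 from the window conditions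
  constructor
  · intro h
    constructor
    · intro i hi1 hi2
      rw [pmF_eq m n i hi1 (by omega), pmF_eq m n (i+1) (by omega) (by omega)]
      have := h (m * (i - 1))
      rwa [show m * (i - 1) + (m:ℤ) = m * (i + 1 - 1) by ring] at this
    · rw [pmF_eq m n n (by exact_mod_cast hn) le_rfl,
          pmF_eq m n 1 le_rfl (by exact_mod_cast hn)]
      have := h (m * ((n:ℤ) - 1))
      have h2 : ω (m * ((n:ℤ) - 1) + m) = ω (m * 1 - m) + m * n := by
        have := hper' m ((m:ℤ) * 1 - m)
        rw [show (m:ℤ) * 1 - m + n * m = m * ((n:ℤ) - 1) + m by ring] at this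
        rw [this]; ring
      rw [h2] at this
      have h3 : (m:ℤ) * 1 - m = m * (1 - 1) := by ring
      rwa [h3] at this
  · rintro ⟨h1, h2⟩ x
    -- step lemma
    have step : ∀ j : ℤ, 0 ≤ j → j < n → ω (m * j) < ω (m * (j + 1)) := by
      intro j hj0 hjn
      rcases lt_or_eq_of_le (by omega : j + 1 ≤ (n:ℤ)) with hlt | heq
      · have := h1 (j + 1) (by omega) (by omega)
        rwa [pmF_eq m n (j+1) (by omega) (by omega),
             pmF_eq m n (j+1+1) (by omega) (by omega),
             show (j:ℤ) + 1 - 1 = j by ring, show (j:ℤ) + 1 + 1 - 1 = j + 1 by ring] at this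
      · -- j + 1 = n
        have hj : j = (n:ℤ) - 1 := by omega
        rw [hj]
        rw [pmF_eq m n n (by exact_mod_cast hn) le_rfl,
            pmF_eq m n 1 le_rfl (by exact_mod_cast hn)] at h2
        have hw : ω ((m:ℤ) * ((n:ℤ) - 1 + 1)) = ω (m * ((1:ℤ) - 1)) + m * n := by
          have := hper' m ((m:ℤ) * ((1:ℤ) - 1))
          rw [show (m:ℤ) * ((1:ℤ) - 1) + n * m = m * ((n:ℤ) - 1 + 1) by ring] at this
          rw [this]; ring
        rw [hw]
        exact h2
    -- Bezout: 1 = m * a + n * b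
    obtain ⟨a, b, hab⟩ : ∃ a b : ℤ, (m:ℤ) * a + n * b = 1 := by
      refine ⟨Nat.gcdA m n, Nat.gcdB m n, ?_⟩
      have := Nat.gcd_eq_gcd_ab m n
      rw [hco] at this
      push_cast at this
      linarith
    set j : ℤ := (a * x) % n with hjdef
    have hj0 : 0 ≤ j := Int.emod_nonneg _ (by exact_mod_cast hn.ne')
    have hjn : j < n := Int.emod_lt_of_pos _ (by exact_mod_cast hn)
    set k : ℤ := b * x + m * ((a * x) / n) with hkdef
    have hx : x = m * j + n * k := by
      have hdm : a * x = n * ((a * x) / n) + j := by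
        rw [hjdef]; rw [Int.mul_ediv_add_emod]
      calc x = m * (a * x) + n * (b * x) := by linear_combination -x * hab
        _ = m * (n * ((a * x)/n) + j) + n * (b * x) := by rw [← hdm]
        _ = m * j + n * k := by rw [hkdef]; ring
    have e1 : ω x = ω (m * j) + n * k := by
      rw [hx, hper' k (m * j)]
    have e2 : ω (x + m) = ω (m * (j + 1)) + n * k := by
      rw [hx, show (m:ℤ) * j + n * k + m = m * (j + 1) + n * k by ring, hper' k]
    rw [e1, e2]
    have := step j hj0 hjn
    omega
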